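/- Let L be a bounded lattice equipped with unary operations ¬, □, ◇ where ¬ is antitone with ¬1 = 0, □ is multiplicative (□(a ∧ b) = □a ∧ □b and □1 = 1), and ◇ is additive (◇(a ∨ b) = ◇a ∨ ◇b and ◇0 = 0). Define X = {(F, I) : F is a filter in L, I is an ideal in L, and {¬a : a ∈ F} ⊆ I}, with (F,I) ◁ (F',I') iff I ∩ F' = ∅; (F,I) R (F',I') iff for all a ∈ L, □a ∈ F implies a ∈ F'; and (F,I) Q (F',I') iff for all a ∈ L, ◇a ∈ I implies a ∈ I'. Then: (i) (X, ◁, R, Q) is an additive modal frame; (ii) the map a ↦ â = {(F,I) ∈ X : a ∈ F} is an injective bounded-lattice homomorphism into the complete lattice of c_◁-fixpoints of (X, ◁) satisfying (¬a)^ = ¬_◁(â), (□a)^ = □_R(â), and (◇a)^ = ◇_Q(â); and (iii) the image {â : a ∈ L} is exactly the set of c_◁-fixpoints that are compact open in the topology on X generated by {â : a ∈ L}. -/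
import Mathlib


/-- The closure operator `c_◁` of a relational frame `(X, ◁)`, where `lt y x` means `y ◁ x`. -/
def clOp {X : Type*} (lt : X → X → Prop) (A : Set X) : Set X :=
  {x | ∀ y, lt y x → ∃ z, lt y z ∧ z ∈ A}

/-- The negation operation `¬_◁` of a relational frame. -/
def ngOp {X : Type*} (lt : X → X → Prop) (A : Set X) : Set X :=
  {x | ∀ y, lt y x → y ∉ A}

/-- The necessity operation `□_R`. -/
def boxOp {X : Type*} (R : X → X → Prop) (A : Set X) : Set X :=
  {x | ∀ y, R x y → y ∈ A}

/-- The possibility operation `◇_Q`. -/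
def diaOp {X : Type*} (lt Q : X → X → Prop) (A : Set X) : Set X :=
  {x | ∀ x', lt x' x → ∃ y' y, Q x' y' ∧ lt y' y ∧ y ∈ A}

/-- The defining condition of a modal frame (interaction of `R` and `◁`). -/
def IsModalFrame {X : Type*} (lt R : X → X → Prop) : Prop :=
  ∀ x y z, R x y → lt z y →
    ∃ x', lt x' x ∧ ∀ x'', lt x' x'' → ∃ y'', R x'' y'' ∧ lt z y''

/-- The additivity condition of a modal frame (interaction of `Q` and `◁`). -/
def IsAdditiveFrame {X : Type*} (lt Q : X → X → Prop) : Prop :=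
  ∀ x y z, Q x y → lt y z →
    ∃ x', lt x x' ∧ ∀ x'', lt x'' x' → ∃ y'', Q x'' y'' ∧ lt y'' z

/-- The negativity condition of a modal frame. -/
def IsNegativeFrame {X : Type*} (lt R Q : X → X → Prop) : Prop :=
  ∀ x y z, R x y → lt z y →
    ∃ x', lt x' x ∧ ∀ x'', lt x'' x' → ∃ y'', Q x'' y'' ∧ lt y'' z

/-- `z` pre-refines `x`. -/
def PreRefines {X : Type*} (lt : X → X → Prop) (z x : X) : Prop :=
  ∀ w, lt w z → lt w x

/-- `◁` is pseudo-reflexive. -/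
def PseudoRefl {X : Type*} (lt : X → X → Prop) : Prop :=
  ∀ x, (∃ y, lt y x) → ∃ z, lt z x ∧ PreRefines lt z x

/-- `◁` is pseudo-symmetric. -/
def PseudoSymm {X : Type*} (lt : X → X → Prop) : Prop :=
  ∀ x y, lt y x → ∃ z, lt z y ∧ PreRefines lt z x

/-- A filter in a bounded lattice: nonempty, upward closed, closed under binary meets. -/
def IsFilt {L : Type*} [Lattice L] [BoundedOrder L] (F : Set L) : Prop :=
  F.Nonempty ∧ (∀ a b : L, a ∈ F → a ≤ b → b ∈ F) ∧ (∀ a b : L, a ∈ F → b ∈ F → a ⊓ b ∈ F)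

/-- An ideal in a bounded lattice: nonempty, downward closed, closed under binary joins. -/
def IsIdl {L : Type*} [Lattice L] [BoundedOrder L] (I : Set L) : Prop :=
  I.Nonempty ∧ (∀ a b : L, a ∈ I → b ≤ a → b ∈ I) ∧ (∀ a b : L, a ∈ I → b ∈ I → a ⊔ b ∈ I)

/-- The set of filter-ideal pairs `(F,I)` with `{¬a : a ∈ F} ⊆ I`. -/
def FIX {L : Type*} [Lattice L] [BoundedOrder L] (neg : L → L) : Type _ :=
  {p : Set L × Set L // IsFilt p.1 ∧ IsIdl p.2 ∧ ∀ a ∈ p.1, neg a ∈ p.2}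

/-- `(F,I) ◁ (F',I')` iff `I ∩ F' = ∅`. -/
def fiLt {L : Type*} [Lattice L] [BoundedOrder L] (neg : L → L) (x y : FIX neg) : Prop :=
  x.1.2 ∩ y.1.1 = ∅

/-- The map `a ↦ â = {(F,I) : a ∈ F}`. -/
def fhat {L : Type*} [Lattice L] [BoundedOrder L] (neg : L → L) (a : L) : Set (FIX neg) :=
  {x | a ∈ x.1.1}

/-- `(F,I) R (F',I')` iff for all `a`, `□a ∈ F` implies `a ∈ F'`. -/
def fiR {L : Type*} [Lattice L] [BoundedOrder L] (neg Box : L → L) (x y : FIX neg) : Prop :=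
  ∀ a : L, Box a ∈ x.1.1 → a ∈ y.1.1

/-- `(F,I) Q (F',I')` iff for all `a`, `◇a ∈ I` implies `a ∈ I'`. -/
def fiQ {L : Type*} [Lattice L] [BoundedOrder L] (neg Dia : L → L) (x y : FIX neg) : Prop :=
  ∀ a : L, Dia a ∈ x.1.2 → a ∈ y.1.2

section StmtAux

open Set

variable {L : Type*} [Lattice L] [BoundedOrder L] {neg Box Dia : L → L}

lemma clOp_subset' {X : Type*} (lt : X → X → Prop) (A : Set X) : A ⊆ clOp lt A :=
  fun x hx y hy => ⟨x, hy, hx⟩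

lemma clOp_mono' {X : Type*} (lt : X → X → Prop) {A B : Set X} (h : A ⊆ B) :
    clOp lt A ⊆ clOp lt B := fun x hx y hy => by
  obtain ⟨z, hz1, hz2⟩ := hx y hy; exact ⟨z, hz1, h hz2⟩

lemma clOp_idem' {X : Type*} (lt : X → X → Prop) (A : Set X) :
    clOp lt (clOp lt A) ⊆ clOp lt A := fun x hx y hy => by
  obtain ⟨z, hz1, hz2⟩ := hx y hy
  exact hz2 y hz1

lemma clOp_union_clOp {X : Type*} (lt : X → X → Prop) (B C : Set X) :
    clOp lt (B ∪ clOp lt C) = clOp lt (B ∪ C) := by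
  apply subset_antisymm
  · intro x hx
    have h1 : B ∪ clOp lt C ⊆ clOp lt (B ∪ C) := by
      apply Set.union_subset
      · exact (Set.subset_union_left).trans (clOp_subset' lt _)
      · exact clOp_mono' lt Set.subset_union_right
    exact clOp_idem' lt (B ∪ C) (clOp_mono' lt h1 hx)
  · exact clOp_mono' lt (Set.union_subset_union_right B (clOp_subset' lt C))

lemma isFilt_Ici (a : L) : IsFilt (Set.Ici a) :=
  ⟨⟨a, le_refl a⟩, fun _ _ h h' => le_trans h h', fun _ _ h h' => le_inf h h'⟩

lemma isIdl_Iic (a : L) : IsIdl (Set.Iic a) :=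
  ⟨⟨a, le_refl a⟩, fun _ _ h h' => le_trans h' h, fun _ _ h h' => sup_le h h'⟩

lemma isIdl_univ : IsIdl (Set.univ : Set L) :=
  ⟨⟨⊥, trivial⟩, fun _ _ _ _ => trivial, fun _ _ _ _ => trivial⟩

lemma top_mem_F (x : FIX neg) : (⊤ : L) ∈ x.1.1 := by
  obtain ⟨⟨c, hc⟩, hu, _⟩ := x.2.1
  exact hu c ⊤ hc le_top

lemma bot_mem_I (x : FIX neg) : (⊥ : L) ∈ x.1.2 := by
  obtain ⟨⟨c, hc⟩, hd, _⟩ := x.2.2.1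
  exact hd c ⊥ hc bot_le

lemma fiLt_iff {x y : FIX neg} : fiLt neg y x ↔ ∀ c ∈ y.1.2, c ∉ x.1.1 := by
  simp only [fiLt, Set.eq_empty_iff_forall_notMem, Set.mem_inter_iff, not_and]

/-- The principal pair `(↑a, ↓¬a)`. -/
def paf (hneg : ∀ a b : L, a ≤ b → neg b ≤ neg a) (a : L) : FIX neg :=
  ⟨(Set.Ici a, Set.Iic (neg a)), isFilt_Ici a, isIdl_Iic _, fun b hb => hneg a b hb⟩

/-- The pair `(↑⊤, ↓a)`. -/
def qaf (hneg1 : neg ⊤ = ⊥) (a : L) : FIX neg :=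
  ⟨(Set.Ici ⊤, Set.Iic a), isFilt_Ici ⊤, isIdl_Iic a, fun b hb => by
    have hb' : b = ⊤ := top_le_iff.mp hb
    simp only [Set.mem_Iic, hb', hneg1]; exact bot_le⟩

lemma paf_mem_fhat (hneg : ∀ a b : L, a ≤ b → neg b ≤ neg a) (a : L) :
    paf hneg a ∈ fhat neg a := le_refl a

lemma qaf_lt_iff (hneg1 : neg ⊤ = ⊥) {a : L} {x : FIX neg} :
    fiLt neg (qaf hneg1 a) x ↔ a ∉ x.1.1 := by
  rw [fiLt_iff]
  constructor
  · intro h; exact h a (le_refl a)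
  · intro h c hc hcx
    exact h (x.2.1.2.1 c a hcx hc)

lemma lt_paf_iff (hneg : ∀ a b : L, a ≤ b → neg b ≤ neg a) {a : L} {y : FIX neg} :
    fiLt neg y (paf hneg a) ↔ a ∉ y.1.2 := by
  rw [fiLt_iff]
  constructor
  · intro h ha; exact h a ha (le_refl a)
  · intro h c hc hca
    exact h (y.2.2.1.2.1 c a hc hca)

lemma box_mono (hBoxMul : ∀ a b : L, Box (a ⊓ b) = Box a ⊓ Box b) {c d : L} (h : c ≤ d) :
    Box c ≤ Box d := by
  have : Box c ⊓ Box d = Box c := by rw [← hBoxMul, inf_eq_left.mpr h]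
  exact inf_eq_left.mp this

lemma dia_mono (hDiaAdd : ∀ a b : L, Dia (a ⊔ b) = Dia a ⊔ Dia b) {c d : L} (h : c ≤ d) :
    Dia c ≤ Dia d := by
  have : Dia c ⊔ Dia d = Dia d := by rw [← hDiaAdd, sup_eq_right.mpr h]
  exact sup_eq_right.mp (by rw [this])

/-- The pair `({c | □c ∈ F_x}, L)`. -/
def boxPre (hBoxMul : ∀ a b : L, Box (a ⊓ b) = Box a ⊓ Box b) (hBoxTop : Box ⊤ = ⊤)
    (x : FIX neg) : FIX neg :=
  ⟨({c | Box c ∈ x.1.1}, Set.univ),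
    ⟨⟨⊤, by simpa [hBoxTop] using top_mem_F x⟩,
     fun c d hc hcd => x.2.1.2.1 _ _ hc (box_mono hBoxMul hcd),
     fun c d hc hd => by simpa [hBoxMul] using x.2.1.2.2 _ _ hc hd⟩,
    isIdl_univ, fun _ _ => trivial⟩

/-- The pair `(↑⊤, {c | ◇c ∈ I_x})`. -/
def diaPre (hneg1 : neg ⊤ = ⊥) (hDiaAdd : ∀ a b : L, Dia (a ⊔ b) = Dia a ⊔ Dia b)
    (hDiaBot : Dia ⊥ = ⊥) (x : FIX neg) : FIX neg :=
  ⟨(Set.Ici ⊤, {c | Dia c ∈ x.1.2}),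
    isFilt_Ici ⊤,
    ⟨⟨⊥, by simpa [hDiaBot] using bot_mem_I x⟩,
     fun c d hc hdc => x.2.2.1.2.1 _ _ hc (dia_mono hDiaAdd hdc),
     fun c d hc hd => by simpa [hDiaAdd] using x.2.2.1.2.2 _ _ hc hd⟩,
    fun b hb => by
      have hb' : b = ⊤ := top_le_iff.mp hb
      simp only [Set.mem_setOf_eq, hb', hneg1, hDiaBot]
      exact bot_mem_I x⟩

/-- The pair `(↑⊤, ↓{□c : c ∈ I_z})`. -/
def boxIdl (hneg1 : neg ⊤ = ⊥) (hBoxMul : ∀ a b : L, Box (a ⊓ b) = Box a ⊓ Box b)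
    (z : FIX neg) : FIX neg :=
  ⟨(Set.Ici ⊤, {d | ∃ c ∈ z.1.2, d ≤ Box c}),
    isFilt_Ici ⊤,
    ⟨(by obtain ⟨c, hc⟩ := z.2.2.1.1; exact ⟨⊥, c, hc, bot_le⟩),
     fun d e ⟨c, hc, hdc⟩ hed => ⟨c, hc, le_trans hed hdc⟩,
     fun d e ⟨c, hc, hdc⟩ ⟨c', hc', hec'⟩ =>
       ⟨c ⊔ c', z.2.2.1.2.2 _ _ hc hc',
        sup_le (le_trans hdc (box_mono hBoxMul le_sup_left))
          (le_trans hec' (box_mono hBoxMul le_sup_right))⟩⟩,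
    fun b hb => by
      obtain ⟨c, hc⟩ := z.2.2.1.1
      have hb' : b = ⊤ := top_le_iff.mp hb
      exact ⟨c, hc, by rw [hb', hneg1]; exact bot_le⟩⟩

/-- The pair `(↑{◇c : c ∈ F_z}, L)`. -/
def diaFlt (hDiaAdd : ∀ a b : L, Dia (a ⊔ b) = Dia a ⊔ Dia b) (z : FIX neg) : FIX neg :=
  ⟨({d | ∃ c ∈ z.1.1, Dia c ≤ d}, Set.univ),
    ⟨(by obtain ⟨c, hc⟩ := z.2.1.1; exact ⟨Dia c, c, hc, le_refl _⟩),
     fun d e ⟨c, hc, hcd⟩ hde => ⟨c, hc, le_trans hcd hde⟩,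
     fun d e ⟨c, hc, hcd⟩ ⟨c', hc', hce⟩ =>
       ⟨c ⊓ c', z.2.1.2.2 _ _ hc hc',
        le_inf (le_trans (dia_mono hDiaAdd inf_le_left) hcd)
          (le_trans (dia_mono hDiaAdd inf_le_right) hce)⟩⟩,
    isIdl_univ, fun _ _ => trivial⟩

end StmtAux

theorem stmt_10 {L : Type*} [Lattice L] [BoundedOrder L] (neg Box Dia : L → L)
    (hneg : ∀ a b : L, a ≤ b → neg b ≤ neg a) (hneg1 : neg ⊤ = ⊥)
    (hBoxMul : ∀ a b : L, Box (a ⊓ b) = Box a ⊓ Box b) (hBoxTop : Box ⊤ = ⊤)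
    (hDiaAdd : ∀ a b : L, Dia (a ⊔ b) = Dia a ⊔ Dia b) (hDiaBot : Dia ⊥ = ⊥) :
    (IsModalFrame (fiLt neg) (fiR neg Box) ∧
      IsAdditiveFrame (fiLt neg) (fiQ neg Dia)) ∧
    (Function.Injective (fhat neg) ∧
     (∀ a : L, clOp (fiLt neg) (fhat neg a) = fhat neg a) ∧
     (∀ a b : L, fhat neg (a ⊓ b) = fhat neg a ∩ fhat neg b) ∧
     (∀ a b : L, fhat neg (a ⊔ b) = clOp (fiLt neg) (fhat neg a ∪ fhat neg b)) ∧
     fhat neg (⊤ : L) = (Set.univ : Set (FIX neg)) ∧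
     fhat neg (⊥ : L) = clOp (fiLt neg) (∅ : Set (FIX neg)) ∧
     (∀ a : L, fhat neg (neg a) = ngOp (fiLt neg) (fhat neg a)) ∧
     (∀ a : L, fhat neg (Box a) = boxOp (fiR neg Box) (fhat neg a)) ∧
     (∀ a : L, fhat neg (Dia a) = diaOp (fiLt neg) (fiQ neg Dia) (fhat neg a))) ∧
    (∀ A : Set (FIX neg),
      (∃ a : L, fhat neg a = A) ↔
        (clOp (fiLt neg) A = A ∧
         @IsCompact _ (TopologicalSpace.generateFrom (Set.range (fhat neg))) A ∧
         @IsOpen _ (TopologicalSpace.generateFrom (Set.range (fhat neg))) A)) := by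

  have fhat_mono : ∀ {a b : L}, a ≤ b → fhat neg a ⊆ fhat neg b := by
    intro a b hab x hx
    exact x.2.1.2.1 a b hx hab
  have h_fix : ∀ a : L, clOp (fiLt neg) (fhat neg a) = fhat neg a := by
    intro a
    apply subset_antisymm
    · intro x hx
      by_contra ha
      obtain ⟨z, hz1, hz2⟩ := hx (qaf hneg1 a) ((qaf_lt_iff hneg1).mpr ha)
      exact (qaf_lt_iff hneg1).mp hz1 hz2
    · exact clOp_subset' _ _
  have h_inj : Function.Injective (fhat neg) := by
    intro a b hab
    apply le_antisymm
    · have h1 := paf_mem_fhat hneg a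
      rw [hab] at h1
      exact h1
    · have h1 := paf_mem_fhat hneg b
      rw [← hab] at h1
      exact h1
  have h_inf : ∀ a b : L, fhat neg (a ⊓ b) = fhat neg a ∩ fhat neg b := by
    intro a b
    ext x
    constructor
    · intro hx
      exact ⟨x.2.1.2.1 _ _ hx inf_le_left, x.2.1.2.1 _ _ hx inf_le_right⟩
    · intro hx
      exact x.2.1.2.2 _ _ hx.1 hx.2
  have h_top : fhat neg (⊤ : L) = (Set.univ : Set (FIX neg)) :=
    Set.eq_univ_of_forall fun x => top_mem_F x
  have h_bot : fhat neg (⊥ : L) = clOp (fiLt neg) (∅ : Set (FIX neg)) := by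
    apply subset_antisymm
    · intro x hx y hy
      exact absurd hx (fiLt_iff.mp hy ⊥ (bot_mem_I y))
    · intro x hx
      by_contra hb
      obtain ⟨z, _, hz⟩ := hx (qaf hneg1 ⊥) ((qaf_lt_iff hneg1).mpr hb)
      exact hz
  have h_sup : ∀ a b : L, fhat neg (a ⊔ b) = clOp (fiLt neg) (fhat neg a ∪ fhat neg b) := by
    intro a b
    apply subset_antisymm
    · intro x hx y hy
      have hnot : a ∉ y.1.2 ∨ b ∉ y.1.2 := by
        by_contra h
        push_neg at h
        exact fiLt_iff.mp hy (a ⊔ b) (y.2.2.1.2.2 a b h.1 h.2) hx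
      rcases hnot with h | h
      · exact ⟨paf hneg a, (lt_paf_iff hneg).mpr h, Or.inl (paf_mem_fhat hneg a)⟩
      · exact ⟨paf hneg b, (lt_paf_iff hneg).mpr h, Or.inr (paf_mem_fhat hneg b)⟩
    · rw [← h_fix (a ⊔ b)]
      exact clOp_mono' _ (Set.union_subset (fhat_mono le_sup_left) (fhat_mono le_sup_right))
  have h_neg : ∀ a : L, fhat neg (neg a) = ngOp (fiLt neg) (fhat neg a) := by
    intro a
    apply subset_antisymm
    · intro x hx y hy hya
      exact fiLt_iff.mp hy (neg a) (y.2.2.2 a hya) hx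
    · intro x hx
      by_contra hna
      have hlt : fiLt neg (paf hneg a) x := by
        rw [fiLt_iff]
        intro c hc hcx
        exact hna (x.2.1.2.1 c (neg a) hcx hc)
      exact hx (paf hneg a) hlt (paf_mem_fhat hneg a)
  have h_box : ∀ a : L, fhat neg (Box a) = boxOp (fiR neg Box) (fhat neg a) := by
    intro a
    apply subset_antisymm
    · intro x hx y hxy
      exact hxy a hx
    · intro x hx
      exact hx (boxPre hBoxMul hBoxTop x) (fun c hc => hc)
  have h_dia : ∀ a : L, fhat neg (Dia a) = diaOp (fiLt neg) (fiQ neg Dia) (fhat neg a) := by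
    intro a
    apply subset_antisymm
    · intro x hx x' hx'
      refine ⟨diaPre hneg1 hDiaAdd hDiaBot x', paf hneg a, fun c hc => hc, ?_,
        paf_mem_fhat hneg a⟩
      rw [lt_paf_iff hneg]
      intro ha
      exact fiLt_iff.mp hx' (Dia a) ha hx
    · intro x hx
      by_contra hd
      obtain ⟨y', y, hQ, hlt, hy⟩ := hx (qaf hneg1 (Dia a)) ((qaf_lt_iff hneg1).mpr hd)
      exact fiLt_iff.mp hlt a (hQ a (le_refl (Dia a))) hy
  have h_modal : IsModalFrame (fiLt neg) (fiR neg Box) := by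
    intro x y z hR hzy
    refine ⟨boxIdl hneg1 hBoxMul z, ?_, ?_⟩
    · rw [fiLt_iff]
      rintro d ⟨c, hc, hdc⟩ hdx
      exact fiLt_iff.mp hzy c hc (hR c (x.2.1.2.1 d (Box c) hdx hdc))
    · intro x'' hx''
      refine ⟨boxPre hBoxMul hBoxTop x'', fun c hc => hc, ?_⟩
      rw [fiLt_iff]
      intro c hc hcmem
      exact fiLt_iff.mp hx'' (Box c) ⟨c, hc, le_refl _⟩ hcmem
  have h_add : IsAdditiveFrame (fiLt neg) (fiQ neg Dia) := by
    intro x y z hQ hyz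
    refine ⟨diaFlt hDiaAdd z, ?_, ?_⟩
    · rw [fiLt_iff]
      rintro d hd ⟨c, hc, hcd⟩
      exact fiLt_iff.mp hyz c (hQ c (x.2.2.1.2.1 d (Dia c) hd hcd)) hc
    · intro x'' hx''
      refine ⟨diaPre hneg1 hDiaAdd hDiaBot x'', fun c hc => hc, ?_⟩
      rw [fiLt_iff]
      intro c hc hcz
      exact fiLt_iff.mp hx'' (Dia c) hc ⟨c, hcz, le_refl _⟩
  letI tX : TopologicalSpace (FIX neg) := TopologicalSpace.generateFrom (Set.range (fhat neg))
  have hbasis : TopologicalSpace.IsTopologicalBasis (Set.range (fhat neg)) := by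
    refine ⟨?_, ?_, rfl⟩
    · rintro t₁ ⟨a, rfl⟩ t₂ ⟨b, rfl⟩ x hx
      refine ⟨fhat neg (a ⊓ b), ⟨a ⊓ b, rfl⟩, ?_, ?_⟩
      · rw [h_inf]; exact hx
      · rw [h_inf]
    · apply Set.eq_univ_of_forall
      intro x
      exact ⟨fhat neg ⊤, ⟨⊤, rfl⟩, top_mem_F x⟩
  refine ⟨⟨h_modal, h_add⟩, ⟨h_inj, h_fix, h_inf, h_sup, h_top, h_bot, h_neg, h_box, h_dia⟩, ?_⟩
  intro A
  constructor
  · rintro ⟨a, rfl⟩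
    refine ⟨h_fix a, ?_, hbasis.isOpen ⟨a, rfl⟩⟩
    apply isCompact_of_finite_subcover
    intro ι U hU hcov
    have hmem : paf hneg a ∈ ⋃ i, U i := hcov (paf_mem_fhat hneg a)
    rw [Set.mem_iUnion] at hmem
    obtain ⟨i, hi⟩ := hmem
    obtain ⟨v, ⟨b, rfl⟩, hxv, hvU⟩ := hbasis.exists_subset_of_mem_open hi (hU i)
    have hab : a ≤ b := hxv
    refine ⟨{i}, ?_⟩
    exact ((fhat_mono hab).trans hvU).trans
      (Set.subset_iUnion₂ (s := fun j _ => U j) i (Finset.mem_singleton_self i))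
  · rintro ⟨hfixA, hcomp, hopen⟩
    have hch : ∀ x : {x : FIX neg // x ∈ A},
        ∃ b : L, (x : FIX neg) ∈ fhat neg b ∧ fhat neg b ⊆ A := by
      intro x
      obtain ⟨v, ⟨b, rfl⟩, hxv, hvA⟩ := hbasis.exists_subset_of_mem_open x.2 hopen
      exact ⟨b, hxv, hvA⟩
    choose f hf1 hf2 using hch
    obtain ⟨t, ht⟩ := hcomp.elim_finite_subcover (fun x => fhat neg (f x))
      (fun x => hbasis.isOpen ⟨f x, rfl⟩)
      (fun y hy => Set.mem_iUnion.mpr ⟨⟨y, hy⟩, hf1 ⟨y, hy⟩⟩)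
    have key : ∀ s : Finset {x : FIX neg // x ∈ A},
        clOp (fiLt neg) (⋃ x ∈ s, fhat neg (f x)) = fhat neg (s.sup f) := by
      classical
      intro s
      induction s using Finset.induction_on with
      | empty =>
        rw [Finset.sup_empty,
          show (⋃ x ∈ (∅ : Finset {x : FIX neg // x ∈ A}), fhat neg (f x))
            = (∅ : Set (FIX neg)) by simp]
        exact h_bot.symm
      | @insert i s hni ih =>
        rw [Finset.set_biUnion_insert, ← clOp_union_clOp, ih, Finset.sup_insert, h_sup]
    refine ⟨t.sup f, ?_⟩
    have hA : A = ⋃ x ∈ t, fhat neg (f x) :=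
      subset_antisymm ht (Set.iUnion₂_subset fun x _ => hf2 x)
    rw [← key t, ← hA, hfixA]
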